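/- If S is an LPL subset of V, then its closure cl(S), its interior Int(S), and its complement V \ S are LPL. -/

import Mathlib

open Set

/-- An (open or closed) affine half-space in a real vector space. -/
def IsHalfspace {V : Type*} [AddCommGroup V] [Module ℝ V] (H : Set V) : Prop :=
  ∃ (f : V →ₗ[ℝ] ℝ) (c : ℝ), H = {x | f x < c} ∨ H = {x | f x ≤ c}

/-- A convex polyhedron: the intersection of finitely many open or closed affine
half-spaces (the empty intersection being the whole space). -/
def IsConvexPolyhedron {V : Type*} [AddCommGroup V] [Module ℝ V] (P : Set V) : Prop :=
  ∃ (n : ℕ) (H : Fin n → Set V), (∀ i, IsHalfspace (H i)) ∧ P = ⋂ i, H i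

/-- A PL (piecewise linear) set: a finite union of convex polyhedra. -/
def IsPL {V : Type*} [AddCommGroup V] [Module ℝ V] (S : Set V) : Prop :=
  ∃ (n : ℕ) (P : Fin n → Set V), (∀ i, IsConvexPolyhedron (P i)) ∧ S = ⋃ i, P i

/-- An LPL (locally piecewise linear) set: the union of a locally finite family of
convex polyhedra. -/
def IsLPL {V : Type*} [AddCommGroup V] [Module ℝ V] [TopologicalSpace V] (S : Set V) : Prop :=
  ∃ Ps : Set (Set V), (∀ P ∈ Ps, IsConvexPolyhedron P) ∧
    LocallyFinite (fun P : Ps => (P : Set V)) ∧ S = ⋃₀ Ps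


open Set

section Basic
variable {V : Type*} [AddCommGroup V] [Module ℝ V]

lemma isHalfspace_compl {H : Set V} (h : IsHalfspace H) : IsHalfspace Hᶜ := by
  obtain ⟨f, c, h | h⟩ := h
  · exact ⟨-f, -c, Or.inr (by ext x; simp [h, neg_le, not_lt])⟩
  · exact ⟨-f, -c, Or.inl (by ext x; simp [h, neg_lt, not_le])⟩

lemma isConvexPolyhedron_univ : IsConvexPolyhedron (univ : Set V) :=
  ⟨0, Fin.elim0, fun i => i.elim0, by simp⟩

lemma IsHalfspace.isConvexPolyhedron {H : Set V} (h : IsHalfspace H) :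
    IsConvexPolyhedron H :=
  ⟨1, fun _ => H, fun _ => h, (iInter_const H).symm⟩

lemma isConvexPolyhedron_empty : IsConvexPolyhedron (∅ : Set V) := by
  refine IsHalfspace.isConvexPolyhedron ⟨0, 0, Or.inl ?_⟩
  ext x; simp

lemma IsConvexPolyhedron.exists_sInter {P : Set V} (h : IsConvexPolyhedron P) :
    ∃ T : Set (Set V), T.Finite ∧ (∀ H ∈ T, IsHalfspace H) ∧ P = ⋂₀ T := by
  obtain ⟨n, H, hH, rfl⟩ := h
  exact ⟨range H, finite_range H, by rintro _ ⟨i, rfl⟩; exact hH i, (sInter_range H).symm⟩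

lemma isConvexPolyhedron_sInter {T : Set (Set V)} (hT : T.Finite)
    (h : ∀ H ∈ T, IsHalfspace H) : IsConvexPolyhedron (⋂₀ T) := by
  obtain ⟨n, f, hf⟩ := hT.fin_embedding
  refine ⟨n, fun i => f i, fun i => h _ (by rw [← hf]; exact mem_range_self i), ?_⟩
  rw [← hf, sInter_range]

lemma IsConvexPolyhedron.inter {P Q : Set V} (hP : IsConvexPolyhedron P)
    (hQ : IsConvexPolyhedron Q) : IsConvexPolyhedron (P ∩ Q) := by
  obtain ⟨T, hTf, hTh, rfl⟩ := hP.exists_sInter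
  obtain ⟨T', hTf', hTh', rfl⟩ := hQ.exists_sInter
  rw [← sInter_union]
  exact isConvexPolyhedron_sInter (hTf.union hTf') (fun H hH => hH.elim (hTh H) (hTh' H))

lemma IsConvexPolyhedron.isPL {P : Set V} (h : IsConvexPolyhedron P) : IsPL P :=
  ⟨1, fun _ => P, fun _ => h, (iUnion_const P).symm⟩

lemma IsPL.exists_sUnion {S : Set V} (h : IsPL S) :
    ∃ T : Set (Set V), T.Finite ∧ (∀ P ∈ T, IsConvexPolyhedron P) ∧ S = ⋃₀ T := by
  obtain ⟨n, P, hP, rfl⟩ := h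
  exact ⟨range P, finite_range P, by rintro _ ⟨i, rfl⟩; exact hP i, (sUnion_range P).symm⟩

lemma isPL_sUnion {T : Set (Set V)} (hT : T.Finite)
    (h : ∀ P ∈ T, IsConvexPolyhedron P) : IsPL (⋃₀ T) := by
  obtain ⟨n, f, hf⟩ := hT.fin_embedding
  refine ⟨n, fun i => f i, fun i => h _ (by rw [← hf]; exact mem_range_self i), ?_⟩
  rw [← hf, sUnion_range]

lemma IsPL.inter {S S' : Set V} (hS : IsPL S) (hS' : IsPL S') : IsPL (S ∩ S') := by
  obtain ⟨T, hTf, hTh, rfl⟩ := hS.exists_sUnion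
  obtain ⟨T', hTf', hTh', rfl⟩ := hS'.exists_sUnion
  have : ⋃₀ T ∩ ⋃₀ T' = ⋃₀ (image2 (· ∩ ·) T T') := by
    ext x
    simp only [mem_inter_iff, mem_sUnion, mem_image2]
    constructor
    · rintro ⟨⟨A, hA, hxA⟩, B, hB, hxB⟩
      exact ⟨A ∩ B, ⟨A, hA, B, hB, rfl⟩, hxA, hxB⟩
    · rintro ⟨_, ⟨A, hA, B, hB, rfl⟩, hxA, hxB⟩
      exact ⟨⟨A, hA, hxA⟩, B, hB, hxB⟩
  rw [this]
  refine isPL_sUnion (hTf.image2 _ hTf') ?_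
  rintro _ ⟨A, hA, B, hB, rfl⟩
  exact (hTh A hA).inter (hTh' B hB)

lemma isPL_sInter {T : Set (Set V)} (hT : T.Finite) (h : ∀ A ∈ T, IsPL A) :
    IsPL (⋂₀ T) := by
  revert h
  refine Set.Finite.induction_on (motive := fun T _ => (∀ A ∈ T, IsPL A) → IsPL (⋂₀ T)) T hT ?_ ?_
  · intro _; simpa using isConvexPolyhedron_univ.isPL
  · intro A T' _ _ ih h
    rw [sInter_insert]
    exact (h A (mem_insert _ _)).inter (ih fun B hB => h B (mem_insert_of_mem _ hB))

lemma IsConvexPolyhedron.isPL_compl {P : Set V} (h : IsConvexPolyhedron P) : IsPL Pᶜ := by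
  obtain ⟨n, H, hH, rfl⟩ := h
  rw [compl_iInter]
  refine ⟨n, fun i => (H i)ᶜ, fun i => (isHalfspace_compl (hH i)).isConvexPolyhedron, rfl⟩

end Basic
section Top
variable {V : Type*} [NormedAddCommGroup V] [NormedSpace ℝ V] [FiniteDimensional ℝ V]

lemma closure_isConvexPolyhedron {P : Set V} (h : IsConvexPolyhedron P) :
    IsConvexPolyhedron (closure P) := by
  obtain ⟨n, H, hH, rfl⟩ := h
  rcases eq_empty_or_nonempty (⋂ i, H i) with he | ⟨p, hp⟩
  · rw [he, closure_empty]; exact isConvexPolyhedron_empty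
  choose f c hfc using hH
  have hHsub : ∀ i, H i ⊆ {x | f i x ≤ c i} := by
    intro i x hx
    rcases hfc i with h' | h'
    · rw [h'] at hx
      show f i x ≤ c i
      exact le_of_lt hx
    · rwa [h'] at hx
  have hcont : ∀ i, Continuous (f i) := fun i => (f i).continuous_of_finiteDimensional
  refine ⟨n, fun i => {x | f i x ≤ c i}, fun i => ⟨f i, c i, Or.inr rfl⟩, ?_⟩
  apply Subset.antisymm
  · exact closure_minimal (iInter_mono hHsub)
      (isClosed_iInter fun i => isClosed_le (hcont i) continuous_const)
  · intro y hy
    have hymem : ∀ i, f i y ≤ c i := fun i => (mem_iInter.1 hy i)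
    have htend : Filter.Tendsto (fun t : ℝ => y + t • (p - y)) (nhdsWithin 0 (Ioi 0)) (nhds y) := by
      have hc : Continuous (fun t : ℝ => y + t • (p - y)) := by continuity
      have := (hc.tendsto 0).mono_left (nhdsWithin_le_nhds (s := Ioi (0:ℝ)))
      simpa using this
    refine mem_closure_of_tendsto htend ?_
    filter_upwards [Ioc_mem_nhdsGT_of_mem (by simp : (0:ℝ) ∈ Ico (0:ℝ) 1)] with t ht
    rw [mem_iInter]
    intro i
    have hval : f i (y + t • (p - y)) = f i y + t * (f i p - f i y) := by
      simp [map_add, map_smul, map_sub, smul_eq_mul]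
    have hpi := mem_iInter.1 hp i
    rcases hfc i with h' | h'
    · rw [h'] at hpi ⊢
      have hp' : f i p < c i := hpi
      show f i (y + t • (p - y)) < c i
      rw [hval]; nlinarith [hymem i, ht.1, ht.2]
    · rw [h'] at hpi ⊢
      have hp' : f i p ≤ c i := hpi
      show f i (y + t • (p - y)) ≤ c i
      rw [hval]; nlinarith [hymem i, ht.1, ht.2]

lemma locallyFinite_subtype_iff {Ps : Set (Set V)} :
    LocallyFinite (fun P : Ps => (P : Set V)) ↔
      ∀ x : V, ∃ U ∈ nhds x, {P ∈ Ps | (P ∩ U).Nonempty}.Finite := by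
  constructor
  · intro h x
    obtain ⟨U, hU, hfin⟩ := h x
    have himg : ((fun i : Ps => (i : Set V)) ''
        {i : Ps | ((i : Set V) ∩ U).Nonempty}).Finite := hfin.image _
    refine ⟨U, hU, Set.Finite.subset himg ?_⟩
    rintro P ⟨hP, hne⟩
    exact ⟨⟨P, hP⟩, hne, rfl⟩
  · intro h x
    obtain ⟨U, hU, hfin⟩ := h x
    refine ⟨U, hU, ?_⟩
    have heq : {i : Ps | ((i : Set V) ∩ U).Nonempty} =
        (fun i : Ps => (i : Set V)) ⁻¹' {P | P ∈ Ps ∧ (P ∩ U).Nonempty} := by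
      ext i; simp [i.2]
    rw [heq]
    exact hfin.preimage Subtype.coe_injective.injOn

lemma isLPL_closure {S : Set V} (hS : IsLPL S) : IsLPL (closure S) := by
  obtain ⟨Ps, hpoly, hlf, rfl⟩ := hS
  refine ⟨closure '' Ps, ?_, ?_, ?_⟩
  · rintro _ ⟨P, hP, rfl⟩; exact closure_isConvexPolyhedron (hpoly P hP)
  · rw [locallyFinite_subtype_iff]
    intro x
    obtain ⟨U, hU, hfin⟩ := hlf.closure x
    refine ⟨U, hU, ?_⟩
    have hsub : {Q ∈ closure '' Ps | (Q ∩ U).Nonempty} ⊆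
        (fun i : Ps => closure (i : Set V)) '' {i : Ps | (closure (i : Set V) ∩ U).Nonempty} := by
      rintro Q ⟨⟨P, hP, rfl⟩, hne⟩
      exact ⟨⟨P, hP⟩, hne, rfl⟩
    exact Set.Finite.subset (hfin.image (fun i : Ps => closure (i : Set V))) hsub
  · rw [sUnion_eq_iUnion, hlf.closure_iUnion, sUnion_image]
    ext x; simp

end Top
section Cube
variable (V : Type*) [NormedAddCommGroup V] [NormedSpace ℝ V] [FiniteDimensional ℝ V]

noncomputable def bV : Module.Basis (Fin (Module.finrank ℝ V)) ℝ V := Module.finBasis ℝ V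

def cube (z : Fin (Module.finrank ℝ V) → ℤ) : Set V :=
  {x | ∀ i, (z i : ℝ) ≤ (bV V).coord i x ∧ (bV V).coord i x ≤ z i + 1}

variable {V}

lemma coord_continuous (i : Fin (Module.finrank ℝ V)) :
    Continuous fun x : V => (bV V).coord i x :=
  ((bV V).coord i).continuous_of_finiteDimensional

lemma cube_polyhedron (z : Fin (Module.finrank ℝ V) → ℤ) :
    IsConvexPolyhedron (cube V z) := by
  have h1 : IsConvexPolyhedron (⋂ i, {x : V | (z i : ℝ) ≤ (bV V).coord i x}) := by
    refine ⟨_, _, fun i => ?_, rfl⟩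
    refine ⟨-((bV V).coord i), -(z i : ℝ), Or.inr ?_⟩
    ext x; simp [neg_le]
  have h2 : IsConvexPolyhedron (⋂ i, {x : V | (bV V).coord i x ≤ (z i : ℝ) + 1}) := by
    exact ⟨_, _, fun i => ⟨(bV V).coord i, (z i : ℝ) + 1, Or.inr rfl⟩, rfl⟩
  have heq : cube V z = (⋂ i, {x : V | (z i : ℝ) ≤ (bV V).coord i x}) ∩
      (⋂ i, {x : V | (bV V).coord i x ≤ (z i : ℝ) + 1}) := by
    ext x
    simp only [cube, mem_setOf_eq, mem_inter_iff, mem_iInter, forall_and]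
  rw [heq]
  exact h1.inter h2

lemma cube_compact (z : Fin (Module.finrank ℝ V) → ℤ) : IsCompact (cube V z) := by
  have hbox : IsCompact (univ.pi fun i : Fin (Module.finrank ℝ V) =>
      Icc (z i : ℝ) ((z i : ℝ) + 1)) :=
    isCompact_univ_pi fun i => isCompact_Icc
  have hcont : Continuous ((bV V).equivFun.symm :
      (Fin (Module.finrank ℝ V) → ℝ) → V) :=
    ((bV V).equivFun.symm : (Fin (Module.finrank ℝ V) → ℝ) →ₗ[ℝ] V).continuous_of_finiteDimensional
  have heq : cube V z = (bV V).equivFun.symm ''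
      (univ.pi fun i => Icc (z i : ℝ) ((z i : ℝ) + 1)) := by
    ext x
    constructor
    · intro hx
      refine ⟨(bV V).equivFun x, ?_, (bV V).equivFun.symm_apply_apply x⟩
      intro i _
      simpa [Module.Basis.equivFun_apply, ← Module.Basis.coord_apply] using hx i
    · rintro ⟨w, hw, rfl⟩
      intro i
      have h := congrFun ((bV V).equivFun.apply_symm_apply w) i
      rw [Module.Basis.equivFun_apply] at h
      have : (bV V).coord i ((bV V).equivFun.symm w) = w i := by
        rw [Module.Basis.coord_apply]; exact h
      rw [this]
      exact ⟨(hw i (mem_univ i)).1, (hw i (mem_univ i)).2⟩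
  rw [heq]
  exact hbox.image hcont

lemma cube_cover (x : V) : x ∈ cube V fun i => ⌊(bV V).coord i x⌋ :=
  fun i => ⟨Int.floor_le _, (Int.lt_floor_add_one _).le⟩

lemma cube_locallyFinite (x : V) : ∃ U ∈ nhds x,
    {z : Fin (Module.finrank ℝ V) → ℤ | (cube V z ∩ U).Nonempty}.Finite := by
  set U : Set V := {y | ∀ i, |(bV V).coord i y - (bV V).coord i x| < 1} with hUdef
  have hUopen : IsOpen U := by
    have : U = ⋂ i, {y : V | |(bV V).coord i y - (bV V).coord i x| < 1} := by
      ext y; simp [hUdef]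
    rw [this]
    exact isOpen_iInter_of_finite fun i =>
      isOpen_lt (((coord_continuous i).sub continuous_const).abs) continuous_const
  have hxU : x ∈ U := fun i => by simp
  refine ⟨U, hUopen.mem_nhds hxU, ?_⟩
  refine Set.Finite.subset (Set.Finite.pi fun i =>
    Set.finite_Icc (⌈(bV V).coord i x - 2⌉ : ℤ) ⌊(bV V).coord i x + 1⌋) ?_
  rintro z ⟨y, hyc, hyU⟩
  intro i _
  have h1 := (hyc i).1
  have h2 := (hyc i).2
  have h3 := abs_lt.1 (hyU i)
  constructor
  · rw [Int.ceil_le]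
    push_cast
    linarith [h3.1, h3.2]
  · rw [Int.le_floor]
    push_cast
    linarith [h3.1, h3.2]

end Cube
section Main
variable {V : Type*} [NormedAddCommGroup V] [NormedSpace ℝ V] [FiniteDimensional ℝ V]

lemma isLPL_compl {S : Set V} (hS : IsLPL S) : IsLPL Sᶜ := by
  obtain ⟨Ps, hpoly, hlf, rfl⟩ := hS
  have hTfin : ∀ z : Fin (Module.finrank ℝ V) → ℤ,
      {P ∈ Ps | (P ∩ cube V z).Nonempty}.Finite := by
    intro z
    have h1 := hlf.finite_nonempty_inter_compact (cube_compact z)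
    refine Set.Finite.subset (h1.image (fun i : Ps => (i : Set V))) ?_
    rintro P ⟨hP, hne⟩
    exact ⟨⟨P, hP⟩, hne, rfl⟩
  have hQPL : ∀ z, IsPL ((⋃₀ Ps)ᶜ ∩ cube V z) := by
    intro z
    have heq : (⋃₀ Ps)ᶜ ∩ cube V z =
        cube V z ∩ ⋂₀ (compl '' {P ∈ Ps | (P ∩ cube V z).Nonempty}) := by
      ext x
      constructor
      · rintro ⟨hnS, hc⟩
        refine ⟨hc, ?_⟩
        rintro A ⟨P, ⟨hP, _⟩, rfl⟩
        exact fun hxP => hnS ⟨P, hP, hxP⟩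
      · rintro ⟨hc, hA⟩
        refine ⟨?_, hc⟩
        rintro ⟨P, hP, hxP⟩
        exact hA Pᶜ ⟨P, ⟨hP, ⟨x, hxP, hc⟩⟩, rfl⟩ hxP
    rw [heq]
    refine (cube_polyhedron z).isPL.inter (isPL_sInter ((hTfin z).image compl) ?_)
    rintro A ⟨P, ⟨hP, _⟩, rfl⟩
    exact (hpoly P hP).isPL_compl
  choose n F hFpoly hFeq using hQPL
  refine ⟨{A | ∃ z i, A = F z i}, ?_, ?_, ?_⟩
  · rintro A ⟨z, i, rfl⟩
    exact hFpoly z i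
  · rw [locallyFinite_subtype_iff]
    intro x
    obtain ⟨U, hU, hUfin⟩ := cube_locallyFinite x
    refine ⟨U, hU, ?_⟩
    have hsub : {A ∈ {A | ∃ z i, A = F z i} | (A ∩ U).Nonempty} ⊆
        ⋃ z ∈ {z | (cube V z ∩ U).Nonempty}, range (F z) := by
      rintro A ⟨⟨z, i, rfl⟩, hne⟩
      have hsubcube : F z i ⊆ cube V z := by
        intro y hy
        have hmem : y ∈ ⋃ j, F z j := mem_iUnion.2 ⟨i, hy⟩
        rw [← hFeq z] at hmem
        exact hmem.2
      obtain ⟨y, hy1, hy2⟩ := hne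
      exact mem_biUnion ⟨y, hsubcube hy1, hy2⟩ ⟨i, rfl⟩
    exact Set.Finite.subset (hUfin.biUnion fun z _ => finite_range (F z)) hsub
  · ext x
    constructor
    · intro hx
      set z0 : Fin (Module.finrank ℝ V) → ℤ := fun i => ⌊(bV V).coord i x⌋ with hz0
      have hmem : x ∈ (⋃₀ Ps)ᶜ ∩ cube V z0 := ⟨hx, cube_cover x⟩
      rw [hFeq z0] at hmem
      obtain ⟨i, hxi⟩ := mem_iUnion.1 hmem
      exact ⟨F z0 i, ⟨z0, i, rfl⟩, hxi⟩
    · rintro ⟨A, ⟨z, i, rfl⟩, hxA⟩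
      have hmem : x ∈ (⋃₀ Ps)ᶜ ∩ cube V z := by
        rw [hFeq z]
        exact mem_iUnion.2 ⟨i, hxA⟩
      exact hmem.1

end Main

theorem LPL_closure_interior_compl {V : Type*} [NormedAddCommGroup V] [NormedSpace ℝ V]
    [FiniteDimensional ℝ V] (S : Set V) (hS : IsLPL S) :
    IsLPL (closure S) ∧ IsLPL (interior S) ∧ IsLPL Sᶜ := by
  refine ⟨isLPL_closure hS, ?_, isLPL_compl hS⟩
  have h : interior S = (closure Sᶜ)ᶜ := by
    rw [closure_compl, compl_compl]
  rw [h]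
  exact isLPL_compl (isLPL_closure (isLPL_compl hS))
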